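/- Let {S_j}_{j∈J} be a covering of ℝ^d by sets of positive finite measure, and {h_j}_{j∈J} a Riesz partition of unity with bounds p, P such that supp h_j ⊆ S_j. Suppose for each j, {μ(S_j)^{-1/2} e_{x_{j,k}} χ_{S_j}}_{k∈K} is a frame for K_{S_j} with bounds m_j, M_j, where m := inf_j m_j > 0 and M := sup_j M_j < ∞. Then {μ(S_j)^{-1/2} h_j e_{x_{j,k}} : j ∈ J, k ∈ K} is a frame for L²(ℝ^d) with frame bounds mp and MP. -/

import Mathlib

open MeasureTheory Filter Topology Classical
open scoped ENNReal NNReal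
noncomputable section
abbrev Rd (d : ℕ) := Fin d → ℝ
abbrev L2 (d : ℕ) := Lp ℂ 2 (volume : Measure (Rd d))
/-- `K_Q`: elements of `L²(ℝ^d)` supported (a.e.) in the closure of `Q`. -/
def Ksp {d : ℕ} (Q : Set (Rd d)) : Set (L2 d) :=
  {f | ∀ᵐ x ∂(volume : Measure (Rd d)), x ∉ closure Q → f x = 0}
/-- `g` is a frame for the subset `F` of `L²(ℝ^d)` with bounds `m`, `M`. -/
def IsFrameWith {d : ℕ} {J : Type*} (g : J → L2 d) (F : Set (L2 d)) (m M : ℝ) : Prop :=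
  (∀ j, g j ∈ F) ∧
  ∀ f ∈ F, m * ‖f‖ ^ 2 ≤ ∑' j, ‖(inner ℂ f (g j) : ℂ)‖ ^ 2 ∧
    (∑' j, ‖(inner ℂ f (g j) : ℂ)‖ ^ 2) ≤ M * ‖f‖ ^ 2
lemma l2norm {d : ℕ} (g : L2 d) :
    ENNReal.ofReal (‖g‖ ^ 2) = ∫⁻ ξ, (‖g ξ‖₊ : ℝ≥0∞) ^ 2 ∂(volume : Measure (Rd d)) := by
  have key : eLpNorm (⇑g) 2 (volume : Measure (Rd d))
      = (∫⁻ ξ, (‖g ξ‖₊ : ℝ≥0∞) ^ 2 ∂(volume : Measure (Rd d))) ^ ((1:ℝ)/2) := by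
    rw [eLpNorm_eq_lintegral_rpow_enorm_toReal two_ne_zero ENNReal.ofNat_ne_top]
    have h2 : ((2:ℝ≥0∞).toReal) = (2:ℝ) := by simp
    rw [h2]
    congr 1
    refine lintegral_congr fun ξ => ?_
    rw [← ENNReal.rpow_natCast]
    norm_num
    rfl
  set I : ℝ≥0∞ := ∫⁻ ξ, (‖g ξ‖₊ : ℝ≥0∞) ^ 2 ∂(volume : Measure (Rd d)) with hI
  have hfin : I ^ ((1:ℝ)/2) ≠ ⊤ := key ▸ Lp.eLpNorm_ne_top g
  rw [Lp.norm_def, key, ENNReal.ofReal_pow ENNReal.toReal_nonneg,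
    ENNReal.ofReal_toReal hfin, ← ENNReal.rpow_natCast (I ^ ((1:ℝ)/2)) 2,
    ← ENNReal.rpow_mul]
  norm_num

lemma ofReal_normsq (z : ℂ) : ENNReal.ofReal (‖z‖ ^ 2) = (‖z‖₊ : ℝ≥0∞) ^ 2 := by
  rw [ENNReal.ofReal_pow (norm_nonneg _), ofReal_norm, enorm_eq_nnnorm]


/-- Proposition: if `{S_j}` covers `ℝ^d`, `{h_j}` is an RPU associated to `{S_j}` with
bounds `p,P`, and `{μ(S_j)^{-1/2} e_{x_{j,k}} χ_{S_j}}_k` is a frame for `K_{S_j}` with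
bounds `m_j,M_j`, `m = inf m_j > 0`, `M = sup M_j < ∞`, then
`{μ(S_j)^{-1/2} h_j e_{x_{j,k}}}` is a frame for `L²(ℝ^d)` with bounds `mp, MP`. -/
theorem stmt14 {d : ℕ} {J K : Type*} [Countable J] [Countable K]
    (S : J → Set (Rd d)) (hSm : ∀ j, MeasurableSet (S j))
    (hSpos : ∀ j, 0 < volume (S j)) (hSfin : ∀ j, volume (S j) < ⊤)
    (hcover : (⋃ j, S j) = Set.univ)
    (h : J → Rd d → ℂ) (hmeas : ∀ j, Measurable (h j))
    (hsupp : ∀ j, Function.support (h j) ⊆ S j)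
    (p P m M : ℝ) (hp : 0 < p) (hm : 0 < m)
    (hRPU : ∀ᵐ ξ ∂(volume : Measure (Rd d)),
      p ≤ ∑' j, ‖h j ξ‖ ^ 2 ∧ (∑' j, ‖h j ξ‖ ^ 2) ≤ P)
    (x : J → K → Rd d) (mj Mj : J → ℝ)
    (hmj : ∀ j, m ≤ mj j) (hMj : ∀ j, Mj j ≤ M)
    (E : J → K → L2 d)
    (hE : ∀ j k, ∀ᵐ ξ ∂(volume : Measure (Rd d)),
      E j k ξ = if ξ ∈ S j then
        ((Real.sqrt (volume (S j)).toReal)⁻¹ : ℂ) *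
          Complex.exp (-2 * Real.pi * Complex.I * ((∑ i, x j k i * ξ i : ℝ) : ℂ))
        else 0)
    (hEframe : ∀ j, IsFrameWith (E j) (Ksp (S j)) (mj j) (Mj j))
    (G : J × K → L2 d)
    (hG : ∀ j k, ∀ᵐ ξ ∂(volume : Measure (Rd d)),
      G (j, k) ξ = ((Real.sqrt (volume (S j)).toReal)⁻¹ : ℂ) * h j ξ *
        Complex.exp (-2 * Real.pi * Complex.I * ((∑ i, x j k i * ξ i : ℝ) : ℂ))) :
    IsFrameWith G (Set.univ : Set (L2 d)) (m * p) (M * P) := by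
  classical
  -- basic positivity facts
  obtain ⟨j₀, hj₀⟩ : ∃ j, (fun _ => (0:ℝ)) ∈ S j := by
    have : (fun _ => (0:ℝ)) ∈ ⋃ j, S j := by rw [hcover]; trivial
    exact Set.mem_iUnion.mp this
  have hvolne : (volume : Measure (Rd d)) ≠ 0 := by
    intro h0
    have := hSpos j₀
    rw [h0] at this
    simp at this
  have hane : (ae (volume : Measure (Rd d))).NeBot := ae_neBot.mpr hvolne
  obtain ⟨ξ₁, hξ₁⟩ := hRPU.exists
  have hpP : p ≤ P := le_trans hξ₁.1 hξ₁.2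
  have hP : (0:ℝ) < P := lt_of_lt_of_le hp hpP
  -- M ≥ 0
  have hM0 : (0:ℝ) ≤ M := by
    set g : L2 d := indicatorConstLp 2 (hSm j₀) (hSfin j₀).ne (1:ℂ) with hg
    have hgK : g ∈ Ksp (S j₀) := by
      filter_upwards [indicatorConstLp_coeFn (p := 2) (hs := hSm j₀)
        (hμs := (hSfin j₀).ne) (c := (1:ℂ))] with ξ hξ hξc
      rw [hξ]
      exact Set.indicator_of_notMem (fun hmem => hξc (subset_closure hmem)) _
    have hgn : 0 < ‖g‖ := by
      rw [hg, norm_indicatorConstLp two_ne_zero ENNReal.ofNat_ne_top]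
      have h1 : (0:ℝ) < (volume (S j₀)).toReal :=
        ENNReal.toReal_pos (hSpos j₀).ne' (hSfin j₀).ne
      simp only [norm_one, one_mul]
      exact Real.rpow_pos_of_pos h1 _
    obtain ⟨hle1, hle2⟩ := (hEframe j₀).2 g hgK
    have h3 : (0:ℝ) ≤ ∑' k, ‖(inner ℂ g (E j₀ k) : ℂ)‖ ^ 2 :=
      tsum_nonneg fun k => sq_nonneg _
    have h4 : (0:ℝ) ≤ M * ‖g‖ ^ 2 :=
      le_trans h3 (le_trans hle2 (mul_le_mul_of_nonneg_right (hMj j₀) (sq_nonneg _)))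
    nlinarith [mul_pos hgn hgn]
  refine ⟨fun _ => trivial, fun f _ => ?_⟩
  -- a.e. summability and pointwise bound for h
  have hsumae : ∀ᵐ ξ ∂(volume : Measure (Rd d)), Summable fun j => ‖h j ξ‖ ^ 2 := by
    filter_upwards [hRPU] with ξ hξ
    by_contra hns
    rw [tsum_eq_zero_of_not_summable hns] at hξ
    linarith [hξ.1]
  have hbd : ∀ j, ∀ᵐ ξ ∂(volume : Measure (Rd d)), ‖h j ξ‖ ≤ Real.sqrt P := by
    intro j
    filter_upwards [hRPU, hsumae] with ξ hξ hs
    have h1 : ‖h j ξ‖ ^ 2 ≤ P :=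
      le_trans (Summable.le_tsum hs j fun _ _ => sq_nonneg _) hξ.2
    calc ‖h j ξ‖ = Real.sqrt (‖h j ξ‖ ^ 2) := (Real.sqrt_sq (norm_nonneg _)).symm
      _ ≤ Real.sqrt P := Real.sqrt_le_sqrt h1
  -- the localized pieces f * conj (h j)
  have hmem : ∀ j, MemLp (fun ξ => f ξ * (starRingEnd ℂ) (h j ξ)) 2
      (volume : Measure (Rd d)) := by
    intro j
    refine MemLp.of_le_mul (c := Real.sqrt P) (Lp.memLp f)
      ((Lp.aestronglyMeasurable f).mul
        ((Complex.continuous_conj.measurable.comp (hmeas j)).aestronglyMeasurable)) ?_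
    filter_upwards [hbd j] with ξ hξ
    rw [norm_mul, RCLike.norm_conj, mul_comm]
    exact mul_le_mul_of_nonneg_right hξ (norm_nonneg _)
  set fh : J → L2 d := fun j => (hmem j).toLp _ with hfh
  have hK : ∀ j, fh j ∈ Ksp (S j) := by
    intro j
    filter_upwards [(hmem j).coeFn_toLp] with ξ hξ hξc
    rw [hξ]
    have hz : h j ξ = 0 := by
      by_contra hne
      exact hξc (subset_closure (hsupp j (Function.mem_support.mpr hne)))
    simp [hz]
  -- inner product identity
  have hinner : ∀ j k, (inner ℂ f (G (j, k)) : ℂ) = inner ℂ (fh j) (E j k) := by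
    intro j k
    rw [L2.inner_def, L2.inner_def]
    refine integral_congr_ae ?_
    filter_upwards [hG j k, hE j k, (hmem j).coeFn_toLp] with ξ h1 h2 h3
    simp only [RCLike.inner_apply]
    rw [h1, h2, h3]
    by_cases hmemS : ξ ∈ S j
    · simp only [if_pos hmemS, map_mul, Complex.conj_conj]
      ring
    · have hz : h j ξ = 0 := by
        by_contra hne
        exact hmemS (hsupp j (Function.mem_support.mpr hne))
      simp [if_neg hmemS, hz]
  -- frame bounds per piece
  have hrlow : ∀ j, m * ‖fh j‖ ^ 2 ≤ ∑' k, ‖(inner ℂ (fh j) (E j k) : ℂ)‖ ^ 2 := by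
    intro j
    exact le_trans (mul_le_mul_of_nonneg_right (hmj j) (sq_nonneg _)) ((hEframe j).2 (fh j) (hK j)).1
  have hrup : ∀ j, (∑' k, ‖(inner ℂ (fh j) (E j k) : ℂ)‖ ^ 2) ≤ M * ‖fh j‖ ^ 2 := by
    intro j
    exact le_trans ((hEframe j).2 (fh j) (hK j)).2 (mul_le_mul_of_nonneg_right (hMj j) (sq_nonneg _))
  have hsumk : ∀ j, Summable fun k => ‖(inner ℂ (fh j) (E j k) : ℂ)‖ ^ 2 := by
    intro j
    by_cases hz : fh j = 0
    · simpa [hz] using summable_zero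
    · by_contra hns
      have h0 := hrlow j
      rw [tsum_eq_zero_of_not_summable hns] at h0
      have hpos : 0 < ‖fh j‖ ^ 2 := by
        have := norm_pos_iff.mpr hz
        positivity
      nlinarith
  -- pass to ℝ≥0∞
  have hTnn : (∑' jk : J × K, ENNReal.ofReal (‖(inner ℂ f (G jk) : ℂ)‖ ^ 2))
      = ∑' j, ENNReal.ofReal (∑' k, ‖(inner ℂ (fh j) (E j k) : ℂ)‖ ^ 2) := by
    rw [ENNReal.tsum_prod']
    refine tsum_congr fun j => ?_
    rw [ENNReal.ofReal_tsum_of_nonneg (fun k => sq_nonneg _) (hsumk j)]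
    refine tsum_congr fun k => ?_
    rw [hinner j k]
  have hA : ∀ j, ENNReal.ofReal (‖fh j‖ ^ 2)
      = ∫⁻ ξ, (‖f ξ‖₊ : ℝ≥0∞) ^ 2 * (‖h j ξ‖₊ : ℝ≥0∞) ^ 2 ∂(volume : Measure (Rd d)) := by
    intro j
    rw [l2norm]
    refine lintegral_congr_ae ?_
    filter_upwards [(hmem j).coeFn_toLp] with ξ hξ
    rw [hξ]
    simp [nnnorm_mul, RCLike.nnnorm_conj, ENNReal.coe_mul, mul_pow]
  have hSum : (∑' j, ENNReal.ofReal (‖fh j‖ ^ 2))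
      = ∫⁻ ξ, (‖f ξ‖₊ : ℝ≥0∞) ^ 2 * ∑' j, (‖h j ξ‖₊ : ℝ≥0∞) ^ 2 ∂(volume : Measure (Rd d)) := by
    simp_rw [hA]
    rw [← lintegral_tsum]
    · refine lintegral_congr fun ξ => ?_
      rw [ENNReal.tsum_mul_left]
    · intro j
      exact (((Lp.aestronglyMeasurable f).enorm.pow_const 2).mul
        (((hmeas j).enorm.pow_const 2).aemeasurable))
  have hae : ∀ᵐ ξ ∂(volume : Measure (Rd d)),
      ENNReal.ofReal p ≤ ∑' j, (‖h j ξ‖₊ : ℝ≥0∞) ^ 2 ∧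
      (∑' j, (‖h j ξ‖₊ : ℝ≥0∞) ^ 2) ≤ ENNReal.ofReal P := by
    filter_upwards [hRPU, hsumae] with ξ hξ hs
    have heq : (∑' j, (‖h j ξ‖₊ : ℝ≥0∞) ^ 2) = ENNReal.ofReal (∑' j, ‖h j ξ‖ ^ 2) := by
      rw [ENNReal.ofReal_tsum_of_nonneg (fun j => sq_nonneg _) hs]
      exact tsum_congr fun j => (ofReal_normsq _).symm
    rw [heq]
    exact ⟨ENNReal.ofReal_le_ofReal hξ.1, ENNReal.ofReal_le_ofReal hξ.2⟩
  have hUp : (∑' j, ENNReal.ofReal (‖fh j‖ ^ 2))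
      ≤ ENNReal.ofReal P * ENNReal.ofReal (‖f‖ ^ 2) := by
    rw [hSum, l2norm]
    calc (∫⁻ ξ, (‖f ξ‖₊ : ℝ≥0∞) ^ 2 * ∑' j, (‖h j ξ‖₊ : ℝ≥0∞) ^ 2 ∂(volume : Measure (Rd d)))
        ≤ ∫⁻ ξ, ENNReal.ofReal P * (‖f ξ‖₊ : ℝ≥0∞) ^ 2 ∂(volume : Measure (Rd d)) := by
          refine lintegral_mono_ae ?_
          filter_upwards [hae] with ξ hξ
          rw [mul_comm (ENNReal.ofReal P)]
          exact mul_le_mul_right hξ.2 _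
      _ = ENNReal.ofReal P * ∫⁻ ξ, (‖f ξ‖₊ : ℝ≥0∞) ^ 2 ∂(volume : Measure (Rd d)) :=
          lintegral_const_mul' _ _ ENNReal.ofReal_ne_top
  have hLow : ENNReal.ofReal p * ENNReal.ofReal (‖f‖ ^ 2)
      ≤ ∑' j, ENNReal.ofReal (‖fh j‖ ^ 2) := by
    rw [hSum, l2norm]
    calc ENNReal.ofReal p * ∫⁻ ξ, (‖f ξ‖₊ : ℝ≥0∞) ^ 2 ∂(volume : Measure (Rd d))
        = ∫⁻ ξ, ENNReal.ofReal p * (‖f ξ‖₊ : ℝ≥0∞) ^ 2 ∂(volume : Measure (Rd d)) :=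
          (lintegral_const_mul' _ _ ENNReal.ofReal_ne_top).symm
      _ ≤ ∫⁻ ξ, (‖f ξ‖₊ : ℝ≥0∞) ^ 2 * ∑' j, (‖h j ξ‖₊ : ℝ≥0∞) ^ 2 ∂(volume : Measure (Rd d)) := by
          refine lintegral_mono_ae ?_
          filter_upwards [hae] with ξ hξ
          rw [mul_comm (ENNReal.ofReal p)]
          exact mul_le_mul_right hξ.1 _
  -- total ENNReal bounds
  have hTup : (∑' jk : J × K, ENNReal.ofReal (‖(inner ℂ f (G jk) : ℂ)‖ ^ 2))
      ≤ ENNReal.ofReal (M * P * ‖f‖ ^ 2) := by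
    rw [hTnn]
    calc (∑' j, ENNReal.ofReal (∑' k, ‖(inner ℂ (fh j) (E j k) : ℂ)‖ ^ 2))
        ≤ ∑' j, ENNReal.ofReal M * ENNReal.ofReal (‖fh j‖ ^ 2) := by
          refine ENNReal.tsum_le_tsum fun j => ?_
          rw [← ENNReal.ofReal_mul hM0]
          exact ENNReal.ofReal_le_ofReal (hrup j)
      _ = ENNReal.ofReal M * ∑' j, ENNReal.ofReal (‖fh j‖ ^ 2) := ENNReal.tsum_mul_left
      _ ≤ ENNReal.ofReal M * (ENNReal.ofReal P * ENNReal.ofReal (‖f‖ ^ 2)) :=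
          mul_le_mul_right hUp _
      _ = ENNReal.ofReal (M * P * ‖f‖ ^ 2) := by
          rw [← ENNReal.ofReal_mul hP.le, ← ENNReal.ofReal_mul hM0, mul_assoc]
  have hTlow : ENNReal.ofReal (m * p * ‖f‖ ^ 2)
      ≤ ∑' jk : J × K, ENNReal.ofReal (‖(inner ℂ f (G jk) : ℂ)‖ ^ 2) := by
    rw [hTnn]
    calc ENNReal.ofReal (m * p * ‖f‖ ^ 2)
        = ENNReal.ofReal m * (ENNReal.ofReal p * ENNReal.ofReal (‖f‖ ^ 2)) := by
          rw [mul_assoc, ENNReal.ofReal_mul hm.le, ENNReal.ofReal_mul hp.le]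
      _ ≤ ENNReal.ofReal m * ∑' j, ENNReal.ofReal (‖fh j‖ ^ 2) := mul_le_mul_right hLow _
      _ = ∑' j, ENNReal.ofReal m * ENNReal.ofReal (‖fh j‖ ^ 2) := ENNReal.tsum_mul_left.symm
      _ ≤ ∑' j, ENNReal.ofReal (∑' k, ‖(inner ℂ (fh j) (E j k) : ℂ)‖ ^ 2) := by
          refine ENNReal.tsum_le_tsum fun j => ?_
          rw [← ENNReal.ofReal_mul hm.le]
          exact ENNReal.ofReal_le_ofReal (hrlow j)
  -- back to ℝ
  have hsummT : Summable fun jk : J × K => ‖(inner ℂ f (G jk) : ℂ)‖ ^ 2 := by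
    have hne : (∑' jk : J × K, ENNReal.ofReal (‖(inner ℂ f (G jk) : ℂ)‖ ^ 2)) ≠ ⊤ :=
      ne_top_of_le_ne_top ENNReal.ofReal_ne_top hTup
    have heq : ∀ jk : J × K, ENNReal.ofReal (‖(inner ℂ f (G jk) : ℂ)‖ ^ 2)
        = ((‖(inner ℂ f (G jk) : ℂ)‖₊ ^ 2 : ℝ≥0) : ℝ≥0∞) := by
      intro jk
      rw [ofReal_normsq]
      push_cast
      ring
    rw [tsum_congr heq] at hne
    have := ENNReal.tsum_coe_ne_top_iff_summable.mp hne
    have h2 := NNReal.summable_coe.mpr this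
    refine h2.congr fun jk => ?_
    push_cast
    ring
  have hofT : ENNReal.ofReal (∑' jk : J × K, ‖(inner ℂ f (G jk) : ℂ)‖ ^ 2)
      = ∑' jk : J × K, ENNReal.ofReal (‖(inner ℂ f (G jk) : ℂ)‖ ^ 2) :=
    ENNReal.ofReal_tsum_of_nonneg (fun jk => sq_nonneg _) hsummT
  constructor
  · rw [← ENNReal.ofReal_le_ofReal_iff (tsum_nonneg fun jk => sq_nonneg _), hofT]
    exact hTlow
  · rw [← ENNReal.ofReal_le_ofReal_iff (by positivity : (0:ℝ) ≤ M * P * ‖f‖ ^ 2), hofT]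
    exact hTup
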